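/- Recurrence for minimal embedding lengths into periodic words: let v be a nonempty word over Σ and let x, y be words all of whose letters occur in v. For a word z whose letters occur in v, write N(z,v) for the least m ∈ ℕ such that z is a subword of the length-m prefix of the infinite periodic word v·v·v⋯ (such m exists). Let j = N(x,v) mod |v|. Then N(x·y, v) = N(x,v) + N(y, v_{(j)}), where v_{(j)} denotes the cyclic shift of v by j positions. -/
import Mathlib



open List
/-- `wpow u k` is the word `u` concatenated `k` times. -/
def wpow {β : Type*} (u : List β) (k : ℕ) : List β := (List.replicate k u).flatten

/-- Auxiliary residual operation, working on reversed words. -/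
def resAux {α : Type*} [DecidableEq α] : List α → List α → List α
  | xr, [] => xr
  | [], _ :: _ => []
  | a :: xr, b :: vr => if a = b then resAux xr vr else resAux (a :: xr) vr
termination_by xr vr => vr.length

/-- The residual `x / v`: the prefix of `x` obtained by removing from `x`
its longest suffix that is a subword of `v`. -/
def res {α : Type*} [DecidableEq α] (x v : List α) : List α :=
  (resAux x.reverse v.reverse).reverse

inductive Act (α : Type*) where
  | write : List α → Act α
  | read : List α → Act α

/-- written part -/
def wri {α : Type*} : List (Act α) → List α
  | [] => []
  | Act.write w :: σ => w ++ wri σ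
  | Act.read _ :: σ => wri σ

/-- read part -/
def rea {α : Type*} : List (Act α) → List α
  | [] => []
  | Act.write _ :: σ => rea σ
  | Act.read w :: σ => w ++ rea σ

/-- `pr σ x` : minimal `σ`-predecessor of `x` (processing `σ` right-to-left). -/
def pr {α : Type*} [DecidableEq α] : List (Act α) → List α → List α
  | [], x => x
  | Act.write v :: σ, x => res (pr σ x) v
  | Act.read u :: σ, x => u ++ pr σ x

/-- lossy step for a single channel action -/
def stepAct {α : Type*} : Act α → List α → List α → Prop
  | Act.write w, x, y => y <+ x ++ w
  | Act.read w, x, y => w ++ y <+ x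

/-- lossy steps along a sequence of channel actions -/
def steps {α : Type*} : List (Act α) → List α → List α → Prop
  | [], x, y => x = y
  | θ :: σ, x, y => ∃ z, stepAct θ x z ∧ steps σ z y

/-- `w` is a fractional power of `u` -/
def FracPow {α : Type*} (u w : List α) : Prop := ∃ k : ℕ, w <+: wpow u k

/-- `x ⊖ u` : remainder of `x` after reading the leftmost embedding of `u`. -/
def ominus {α : Type*} [DecidableEq α] : List α → List α → List α
  | x, [] => x
  | [], _ :: _ => []
  | a :: x, b :: u => if a = b then ominus x u else ominus x (b :: u)

/-- `σ` is increasing -/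
def Increasing {α : Type*} (σ : List (Act α)) : Prop :=
  0 < (wri σ).length ∧
    wpow (rea σ) (wri σ).length <+ wpow (wri σ) ((wri σ).length - 1)


/-- The length-`m` prefix of the infinite periodic word `v·v·v⋯`. -/
def perPrefix {α : Type*} (v : List α) (m : ℕ) : List α := (wpow v m).take m

/-- `Nemb z v`: the least `m` such that `z` is a subword of the length-`m`
prefix of the infinite periodic word `v·v·v⋯`. -/
noncomputable def Nemb {α : Type*} [DecidableEq α] (z v : List α) : ℕ :=
  sInf {m : ℕ | z <+ perPrefix v m}

section NembAux
variable {α : Type*}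

lemma wpow_succ (v : List α) (k : ℕ) : wpow v (k + 1) = v ++ wpow v k := by
  simp [wpow, List.replicate_succ]

lemma wpow_length (v : List α) (k : ℕ) : (wpow v k).length = k * v.length := by
  induction k with
  | zero => simp [wpow]
  | succ n ih => rw [wpow_succ, List.length_append, ih]; ring

lemma wpow_add (v : List α) (a b : ℕ) : wpow v (a + b) = wpow v a ++ wpow v b := by
  show (List.replicate (a + b) v).flatten = _
  rw [List.replicate_add, List.flatten_append]
  rfl

lemma wpow_getElem (v : List α) (hv : 0 < v.length) (k i : ℕ)
    (h : i < (wpow v k).length) :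
    (wpow v k)[i] = v[i % v.length]'(Nat.mod_lt _ hv) := by
  induction k generalizing i with
  | zero => simp [wpow] at h
  | succ n ih =>
    have h2 : i < (v ++ wpow v n).length := by rwa [wpow_succ] at h
    rw [List.getElem_of_eq (wpow_succ v n) h]
    rcases lt_or_ge i v.length with hi | hi
    · rw [List.getElem_append_left hi]
      congr 1
      exact (Nat.mod_eq_of_lt hi).symm
    · rw [List.getElem_append_right hi,
        ih (i - v.length) (by simp only [List.length_append] at h2; omega)]
      congr 1
      conv_rhs => rw [Nat.mod_eq_sub_mod hi]

lemma perPrefix_length (v : List α) (hv : 0 < v.length) (m : ℕ) :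
    (perPrefix v m).length = m := by
  simp [perPrefix, wpow_length]
  nlinarith

lemma perPrefix_getElem (v : List α) (hv : 0 < v.length) (m i : ℕ)
    (h : i < (perPrefix v m).length) :
    (perPrefix v m)[i] = v[i % v.length]'(Nat.mod_lt _ hv) := by
  simp only [perPrefix] at h ⊢
  rw [List.getElem_take, wpow_getElem v hv]

lemma take_perPrefix (v : List α) (hv : 0 < v.length) {a n : ℕ} (h : a ≤ n) :
    (perPrefix v n).take a = perPrefix v a := by
  apply List.ext_getElem
  · rw [List.length_take, perPrefix_length v hv, perPrefix_length v hv]; omega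
  · intro i h1 h2
    rw [List.getElem_take, perPrefix_getElem v hv, perPrefix_getElem v hv]

lemma rot_length (v : List α) (j : ℕ) :
    (v.drop j ++ v.take j).length = v.length := by
  simp; omega

lemma rot_getElem (v : List α) {j : ℕ} (hj : j < v.length) (t : ℕ)
    (ht : t < (v.drop j ++ v.take j).length) :
    (v.drop j ++ v.take j)[t] =
      v[(j + t) % v.length]'(Nat.mod_lt _ (by omega)) := by
  rw [rot_length] at ht
  rcases lt_or_ge t (v.length - j) with h | h
  · rw [List.getElem_append_left (by simp; omega), List.getElem_drop]
    congr 1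
    exact (Nat.mod_eq_of_lt (by omega)).symm
  · rw [List.getElem_append_right (by simp; omega), List.getElem_take]
    congr 1
    have h1 : (j + t) % v.length = (j + t - v.length) % v.length :=
      Nat.mod_eq_sub_mod (by omega)
    rw [h1, Nat.mod_eq_of_lt (by omega)]
    simp
    omega

lemma drop_perPrefix (v : List α) (hv : 0 < v.length) {a n : ℕ} (h : a ≤ n) :
    (perPrefix v n).drop a =
      perPrefix (v.drop (a % v.length) ++ v.take (a % v.length)) (n - a) := by
  have hj : a % v.length < v.length := Nat.mod_lt _ hv
  have hu : 0 < (v.drop (a % v.length) ++ v.take (a % v.length)).length := by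
    rw [rot_length]; exact hv
  apply List.ext_getElem
  · rw [List.length_drop, perPrefix_length v hv, perPrefix_length _ hu]
  · intro i h1 h2
    rw [List.getElem_drop, perPrefix_getElem v hv, perPrefix_getElem _ hu,
      rot_getElem v hj]
    congr 1
    rw [rot_length, Nat.add_mod]

lemma sublist_wpow {z v : List α} (hz : ∀ c ∈ z, c ∈ v) :
    z <+ wpow v z.length := by
  induction z with
  | nil => simp
  | cons a z ih =>
    rw [List.length_cons, wpow_succ]
    have h1 : [a] <+ v := List.singleton_sublist.mpr (hz a (by simp))
    exact List.Sublist.append h1 (ih fun c hc => hz c (by simp [hc]))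

lemma mem_perPrefix {z v : List α} (hv : 0 < v.length) (hz : ∀ c ∈ z, c ∈ v) :
    z <+ perPrefix v (z.length * v.length) := by
  set m := z.length * v.length with hm
  have hle : z.length ≤ m := Nat.le_mul_of_pos_right _ hv
  have hsplit : wpow v m = wpow v z.length ++ wpow v (m - z.length) := by
    rw [← wpow_add]; congr 1; omega
  have : perPrefix v m = wpow v z.length := by
    rw [perPrefix, hsplit, List.take_append,
      List.take_of_length_le (by rw [wpow_length]),
      show m - (wpow v z.length).length = 0 by rw [wpow_length]; omega,
      List.take_zero, List.append_nil]
  rw [this]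
  exact sublist_wpow hz

lemma nemb_spec {z v : List α} [DecidableEq α] (hv : 0 < v.length)
    (hz : ∀ c ∈ z, c ∈ v) : z <+ perPrefix v (Nemb z v) := by
  have hne : {m : ℕ | z <+ perPrefix v m}.Nonempty :=
    ⟨z.length * v.length, mem_perPrefix hv hz⟩
  exact Nat.sInf_mem hne

end NembAux

/-- recurrence for minimal embedding lengths into periodic words:
`N(x·y, v) = N(x,v) + N(y, v_{(j)})` where `j = N(x,v) mod |v|`. -/
theorem Nemb_append {α : Type*} [DecidableEq α]
    (v x y : List α) (hv : v ≠ [])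
    (hx : ∀ c ∈ x, c ∈ v) (hy : ∀ c ∈ y, c ∈ v) :
    Nemb (x ++ y) v =
      Nemb x v +
        Nemb y (v.drop (Nemb x v % v.length) ++ v.take (Nemb x v % v.length)) := by
  have hv0 : 0 < v.length := List.length_pos_iff.mpr hv
  set n₁ := Nemb x v with hn₁
  set j := n₁ % v.length with hj
  set u := v.drop j ++ v.take j with hu
  have hu0 : 0 < u.length := by rw [hu, rot_length]; exact hv0
  have hmemu : ∀ c ∈ y, c ∈ u := by
    intro c hc
    have : c ∈ v := hy c hc
    rw [hu]
    rw [← List.take_append_drop j v] at this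
    rw [List.mem_append] at this ⊢
    tauto
  have hx_mem : x <+ perPrefix v n₁ := nemb_spec hv0 hx
  set n₂ := Nemb y u with hn₂
  have hy_mem : y <+ perPrefix u n₂ := nemb_spec hu0 hmemu
  apply _root_.le_antisymm
  · apply Nat.sInf_le
    show x ++ y <+ perPrefix v (n₁ + n₂)
    have heq : perPrefix v (n₁ + n₂) = perPrefix v n₁ ++ perPrefix u n₂ := by
      conv_lhs => rw [← List.take_append_drop n₁ (perPrefix v (n₁ + n₂))]
      rw [take_perPrefix v hv0 (by omega), drop_perPrefix v hv0 (by omega)]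
      have hnn : n₁ + n₂ - n₁ = n₂ := by omega
      rw [hnn]
    rw [heq]
    exact hx_mem.append hy_mem
  · set N := Nemb (x ++ y) v with hN
    have hN_mem : x ++ y <+ perPrefix v N := by
      apply nemb_spec hv0
      intro c hc
      rw [List.mem_append] at hc
      rcases hc with h | h
      · exact hx c h
      · exact hy c h
    obtain ⟨w₁, w₂, hw, hxw, hyw⟩ := List.append_sublist_iff.mp hN_mem
    have hlen : w₁.length + w₂.length = N := by
      have := congrArg List.length hw
      rw [perPrefix_length v hv0, List.length_append] at this
      omega
    have ha : w₁.length ≤ N := by omega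
    have hw₁ : w₁ = perPrefix v w₁.length := by
      rw [← take_perPrefix v hv0 ha, hw, List.take_left]
    have hle1 : n₁ ≤ w₁.length := by
      rw [hn₁]
      exact Nat.sInf_le (by rw [Set.mem_setOf_eq, ← hw₁]; exact hxw)
    have hw₂ : w₂ = (perPrefix v N).drop w₁.length := by
      rw [hw, List.drop_left]
    have hy2 : y <+ perPrefix u (N - n₁) := by
      have h1 : w₂ <+ (perPrefix v N).drop n₁ := by
        have hdd : (perPrefix v N).drop w₁.length
            = ((perPrefix v N).drop n₁).drop (w₁.length - n₁) := by
          rw [List.drop_drop]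
          congr 1
          omega
        rw [hw₂, hdd]
        exact List.drop_sublist _ _
      have h2 : (perPrefix v N).drop n₁ = perPrefix u (N - n₁) := by
        rw [drop_perPrefix v hv0 (by omega), ← hj, ← hu]
      exact hyw.trans (h2 ▸ h1)
    have hle2 : n₂ ≤ N - n₁ := by
      rw [hn₂]
      exact Nat.sInf_le hy2
    omega
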